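/- arXiv:2512.03222 — 2 statements merged into one kernel-verified Lean document; each statement's English description precedes it below -/
import Mathlib

section
/- Let F = A − B₁K₁* ∈ ℝ^{n×n} for given A ∈ ℝ^{n×n}, B₁ ∈ ℝ^{n×m}, K₁* ∈ ℝ^{m×n}; let B₂ ∈ ℝ^{n×m}, K₂* ∈ ℝ^{m×n}, let Q_a ∈ ℝ^{n×n} and R̃₂ ∈ ℝ^{m×m} be symmetric positive definite, ρ > 0, and suppose P° ∈ ℝ^{n×n} is a symmetric matrix satisfying FᵀP° + P°F + Q_a + ρK₂*ᵀK₂* − (P°B₂ + ρK₂*ᵀ)(R̃₂ + ρI)⁻¹(B₂ᵀP° + ρK₂*) = 0. Define K₂° = (R̃₂ + ρI)⁻¹(B₂ᵀP° + ρK₂*). Then for every continuous input v : [0,∞) → ℝ^m, every C¹ solution e of ė = Fe + B₂v, and every T > 0: ∫₀^T (e(t)ᵀQ_a e(t) + v(t)ᵀR̃₂ v(t) + ρ(v(t) + K₂*e(t))ᵀ(v(t) + K₂*e(t))) dt = e(0)ᵀP°e(0) − e(T)ᵀP°e(T) + ∫₀^T (v(t) + K₂°e(t))ᵀ(R̃₂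 + ρI)(v(t) + K₂°e(t)) dt. Consequently, if e(T) → 0 as T → ∞, the total cost is at least e(0)ᵀP°e(0), with equality if v(t) = −K₂°e(t) for all t. -/
open Matrix MeasureTheory intervalIntegral Filter

private lemma dotT {a b : ℕ} (A : Matrix (Fin a) (Fin b) ℝ) (x : Fin b → ℝ) (y : Fin a → ℝ) :
    x ⬝ᵥ Aᵀ *ᵥ y = y ⬝ᵥ A *ᵥ x := by
  rw [Matrix.dotProduct_mulVec, Matrix.vecMul_transpose, dotProduct_comm,
    Matrix.dotProduct_mulVec]

private lemma key_id {n m : ℕ}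
    (B₂ : Matrix (Fin n) (Fin m) ℝ) (K₂ : Matrix (Fin m) (Fin n) ℝ)
    (F : Matrix (Fin n) (Fin n) ℝ)
    (Qa : Matrix (Fin n) (Fin n) ℝ)
    (R₂t : Matrix (Fin m) (Fin m) ℝ) (hR₂t : R₂t.PosDef)
    (ρ : ℝ) (hρ : 0 < ρ)
    (Pd : Matrix (Fin n) (Fin n) ℝ) (hPdsymm : Pd.IsSymm)
    (hRic : Fᵀ * Pd + Pd * F + Qa + ρ • (K₂ᵀ * K₂)
      - (Pd * B₂ + ρ • K₂ᵀ) * (R₂t + ρ • (1 : Matrix (Fin m) (Fin m) ℝ))⁻¹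
          * (B₂ᵀ * Pd + ρ • K₂) = 0)
    (K₂d : Matrix (Fin m) (Fin n) ℝ)
    (hK₂d : K₂d = (R₂t + ρ • (1 : Matrix (Fin m) (Fin m) ℝ))⁻¹
      * (B₂ᵀ * Pd + ρ • K₂))
    (x : Fin n → ℝ) (u : Fin m → ℝ) :
    x ⬝ᵥ Qa *ᵥ x + u ⬝ᵥ R₂t *ᵥ u + ρ * ((u + K₂ *ᵥ x) ⬝ᵥ (u + K₂ *ᵥ x))
      = -((F *ᵥ x + B₂ *ᵥ u) ⬝ᵥ Pd *ᵥ x + x ⬝ᵥ Pd *ᵥ (F *ᵥ x + B₂ *ᵥ u))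
        + (u + K₂d *ᵥ x) ⬝ᵥ (R₂t + ρ • (1 : Matrix (Fin m) (Fin m) ℝ)) *ᵥ (u + K₂d *ᵥ x) := by
  set S : Matrix (Fin m) (Fin m) ℝ := R₂t + ρ • (1 : Matrix (Fin m) (Fin m) ℝ) with hS
  set M : Matrix (Fin m) (Fin n) ℝ := B₂ᵀ * Pd + ρ • K₂ with hM
  have hPdT : Pdᵀ = Pd := hPdsymm
  have hR₂T : R₂tᵀ = R₂t := (by simpa using hR₂t.1 : R₂t.IsSymm)
  have hST : Sᵀ = S := by
    rw [hS, Matrix.transpose_add, Matrix.transpose_smul, Matrix.transpose_one, hR₂T]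
  have hSpd : S.PosDef := by
    refine Matrix.PosDef.of_dotProduct_mulVec_pos ?_ ?_
    · show Sᴴ = S
      simpa using hST
    · intro y hy
      have h1 : (0:ℝ) < star y ⬝ᵥ R₂t *ᵥ y := hR₂t.dotProduct_mulVec_pos hy
      have h2 : (0:ℝ) ≤ y ⬝ᵥ y := Finset.sum_nonneg fun i _ => mul_self_nonneg _
      have : star y ⬝ᵥ S *ᵥ y = star y ⬝ᵥ R₂t *ᵥ y + ρ * (y ⬝ᵥ y) := by
        simp [hS, Matrix.add_mulVec, Matrix.smul_mulVec, dotProduct_add,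
          dotProduct_smul, smul_eq_mul]
      rw [this]
      have := mul_nonneg hρ.le h2
      linarith
  have hdet : IsUnit S.det := hSpd.det_pos.ne'.isUnit
  have hSK : S * K₂d = M := by
    rw [hK₂d, ← Matrix.mul_assoc, Matrix.mul_nonsing_inv _ hdet, Matrix.one_mul]
  have hRic2 : Fᵀ * Pd + Pd * F + Qa + ρ • (K₂ᵀ * K₂) = K₂dᵀ * (S * K₂d) := by
    have h0 : Fᵀ * Pd + Pd * F + Qa + ρ • (K₂ᵀ * K₂)
        = (Pd * B₂ + ρ • K₂ᵀ) * S⁻¹ * M := sub_eq_zero.mp hRic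
    have hMT : Pd * B₂ + ρ • K₂ᵀ = Mᵀ := by
      rw [hM, Matrix.transpose_add, Matrix.transpose_mul, Matrix.transpose_smul,
        Matrix.transpose_transpose, hPdT]
    rw [h0, hMT, hSK, hK₂d, Matrix.transpose_mul, Matrix.transpose_nonsing_inv, hST,
      Matrix.mul_assoc]
  -- scalar consequences
  have hx := congrArg (fun N : Matrix (Fin n) (Fin n) ℝ => x ⬝ᵥ N *ᵥ x) hRic2
  simp only [Matrix.add_mulVec, Matrix.smul_mulVec, dotProduct_add, dotProduct_smul,
    smul_eq_mul] at hx
  -- hx : x⬝Fᵀ*Pd x + x⬝Pd*F x + x⬝Qa x + ρ*(x⬝(K₂ᵀK₂)x) = x⬝(K₂dᵀ*(S*K₂d))x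
  have f1 : x ⬝ᵥ (Fᵀ * Pd) *ᵥ x = (F *ᵥ x) ⬝ᵥ Pd *ᵥ x := by
    rw [← Matrix.mulVec_mulVec, dotT, dotProduct_comm]
  have f2 : x ⬝ᵥ Pd *ᵥ (F *ᵥ x) = x ⬝ᵥ (Pd * F) *ᵥ x := by
    rw [Matrix.mulVec_mulVec]
  have f3 : (B₂ *ᵥ u) ⬝ᵥ Pd *ᵥ x = u ⬝ᵥ (B₂ᵀ * Pd) *ᵥ x := by
    rw [← Matrix.mulVec_mulVec, dotT, dotProduct_comm]
  have f4 : x ⬝ᵥ Pd *ᵥ (B₂ *ᵥ u) = (B₂ *ᵥ u) ⬝ᵥ Pd *ᵥ x := by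
    conv_lhs => rw [← hPdT]
    rw [dotT]
  have f5 : (K₂ *ᵥ x) ⬝ᵥ (K₂ *ᵥ x) = x ⬝ᵥ (K₂ᵀ * K₂) *ᵥ x := by
    rw [← Matrix.mulVec_mulVec, dotT]
  have f6 : u ⬝ᵥ S *ᵥ (K₂d *ᵥ x) = u ⬝ᵥ M *ᵥ x := by
    rw [Matrix.mulVec_mulVec, hSK]
  have f7 : (K₂d *ᵥ x) ⬝ᵥ S *ᵥ u = u ⬝ᵥ M *ᵥ x := by
    conv_lhs => rw [← hST]
    rw [dotT, f6]
  have f8 : (K₂d *ᵥ x) ⬝ᵥ S *ᵥ (K₂d *ᵥ x) = x ⬝ᵥ (K₂dᵀ * (S * K₂d)) *ᵥ x := by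
    rw [← Matrix.mulVec_mulVec, dotT, dotProduct_comm, Matrix.mulVec_mulVec]
  have f9 : u ⬝ᵥ S *ᵥ u = u ⬝ᵥ R₂t *ᵥ u + ρ * (u ⬝ᵥ u) := by
    simp [hS, Matrix.add_mulVec, Matrix.smul_mulVec, dotProduct_add,
      dotProduct_smul, smul_eq_mul]
  have f10 : u ⬝ᵥ M *ᵥ x = u ⬝ᵥ (B₂ᵀ * Pd) *ᵥ x + ρ * (u ⬝ᵥ (K₂ *ᵥ x)) := by
    simp [hM, Matrix.add_mulVec, Matrix.smul_mulVec, dotProduct_add,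
      dotProduct_smul, smul_eq_mul]
  -- expand goal
  simp only [add_dotProduct, dotProduct_add, Matrix.mulVec_add,
    add_dotProduct, dotProduct_add]
  rw [f3, f4, f3, f5, f6, f7, f8, f9, f2]
  rw [dotProduct_comm (K₂ *ᵥ x) u]
  rw [← f1]
  linear_combination hx - (2:ℝ) * f10

private lemma quad_hasDerivAt {k : ℕ} (M : Matrix (Fin k) (Fin k) ℝ)
    {e : ℝ → Fin k → ℝ} {d : Fin k → ℝ} {t : ℝ} (he : HasDerivAt e d t) :
    HasDerivAt (fun s => e s ⬝ᵥ M *ᵥ e s)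
      (d ⬝ᵥ M *ᵥ e t + e t ⬝ᵥ M *ᵥ d) t := by
  have hi : ∀ i, HasDerivAt (fun s => e s i) (d i) t := fun i => hasDerivAt_pi.mp he i
  have h : HasDerivAt (fun s => ∑ i, e s i * ∑ j, M i j * e s j)
      (∑ i, (d i * ∑ j, M i j * e t j + e t i * ∑ j, M i j * d j)) t := by
    apply HasDerivAt.fun_sum
    intro i _
    exact (hi i).mul (HasDerivAt.fun_sum fun j _ => (hi j).const_mul (M i j))
  have hfun : (fun s => e s ⬝ᵥ M *ᵥ e s) = fun s => ∑ i, e s i * ∑ j, M i j * e s j := by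
    funext s; simp [dotProduct, mulVec]
  have hval : d ⬝ᵥ M *ᵥ e t + e t ⬝ᵥ M *ᵥ d
      = ∑ i, (d i * ∑ j, M i j * e t j + e t i * ∑ j, M i j * d j) := by
    simp [dotProduct, mulVec, Finset.sum_add_distrib]
  rw [hfun, hval]; exact h

private lemma quad_continuous {k l : ℕ} (M : Matrix (Fin k) (Fin l) ℝ)
    {f : ℝ → Fin k → ℝ} {g : ℝ → Fin l → ℝ} {s : Set ℝ}
    (hf : ContinuousOn f s) (hg : ContinuousOn g s) :
    ContinuousOn (fun t => f t ⬝ᵥ M *ᵥ g t) s := by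
  simp only [dotProduct, mulVec]
  apply continuousOn_finset_sum
  intro i _
  exact ((continuous_apply i).comp_continuousOn hf).mul
    (continuousOn_finset_sum _ fun j _ =>
      (continuousOn_const.mul ((continuous_apply j).comp_continuousOn hg)))

private lemma dot_self_nonneg {k : ℕ} (w : Fin k → ℝ) : 0 ≤ w ⬝ᵥ w :=
  Finset.sum_nonneg fun i _ => mul_self_nonneg _

private lemma mulVec_contOn {k l : ℕ} (M : Matrix (Fin k) (Fin l) ℝ)
    {f : ℝ → Fin l → ℝ} {s : Set ℝ} (hf : ContinuousOn f s) :
    ContinuousOn (fun t => M *ᵥ f t) s := by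
  apply continuousOn_pi.mpr
  intro i
  simp only [mulVec, dotProduct]
  exact continuousOn_finset_sum _ fun j _ =>
    continuousOn_const.mul ((continuous_apply j).comp_continuousOn hf)

private lemma dot_contOn {k : ℕ} {f g : ℝ → Fin k → ℝ} {s : Set ℝ}
    (hf : ContinuousOn f s) (hg : ContinuousOn g s) :
    ContinuousOn (fun t => f t ⬝ᵥ g t) s := by
  simp only [dotProduct]
  exact continuousOn_finset_sum _ fun i _ =>
    ((continuous_apply i).comp_continuousOn hf).mul ((continuous_apply i).comp_continuousOn hg)

private lemma quad_cont_vec {k : ℕ} (M : Matrix (Fin k) (Fin k) ℝ) :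
    Continuous fun x : Fin k → ℝ => x ⬝ᵥ M *ᵥ x := by
  simp only [dotProduct, mulVec]
  exact continuous_finset_sum _ fun i _ => (continuous_apply i).mul
    (continuous_finset_sum _ fun j _ => continuous_const.mul (continuous_apply j))

/-- **Completion of squares for the insider's best-response Riccati equation.**
With `F = A − B₁K₁*`, suppose the symmetric matrix `P°` solves
`FᵀP° + P°F + Q_a + ρK₂*ᵀK₂* − (P°B₂ + ρK₂*ᵀ)(R̃₂+ρI)⁻¹(B₂ᵀP° + ρK₂*) = 0`, and set
`K₂° = (R̃₂+ρI)⁻¹(B₂ᵀP° + ρK₂*)`.  Then for every continuous `v`, every solution `e` of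
`ė = Fe + B₂v`, and every `T > 0`, the insider cost over `[0,T]` equals
`e(0)ᵀP°e(0) − e(T)ᵀP°e(T) + ∫₀ᵀ (v + K₂°e)ᵀ(R̃₂+ρI)(v + K₂°e) dt`; hence if
`e(T) → 0` the total cost is `≥ e(0)ᵀP°e(0)`, with equality for `v = −K₂°e`. -/
theorem insider_best_response_completion_of_squares {n m : ℕ}
    (A : Matrix (Fin n) (Fin n) ℝ) (B₁ B₂ : Matrix (Fin n) (Fin m) ℝ)
    (K₁ K₂ : Matrix (Fin m) (Fin n) ℝ)
    (F : Matrix (Fin n) (Fin n) ℝ) (hF : F = A - B₁ * K₁)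
    (Qa : Matrix (Fin n) (Fin n) ℝ) (hQa : Qa.PosDef)
    (R₂t : Matrix (Fin m) (Fin m) ℝ) (hR₂t : R₂t.PosDef)
    (ρ : ℝ) (hρ : 0 < ρ)
    (Pd : Matrix (Fin n) (Fin n) ℝ) (hPdsymm : Pd.IsSymm)
    (hRic : Fᵀ * Pd + Pd * F + Qa + ρ • (K₂ᵀ * K₂)
      - (Pd * B₂ + ρ • K₂ᵀ) * (R₂t + ρ • (1 : Matrix (Fin m) (Fin m) ℝ))⁻¹
          * (B₂ᵀ * Pd + ρ • K₂) = 0)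
    (K₂d : Matrix (Fin m) (Fin n) ℝ)
    (hK₂d : K₂d = (R₂t + ρ • (1 : Matrix (Fin m) (Fin m) ℝ))⁻¹
      * (B₂ᵀ * Pd + ρ • K₂))
    (v : ℝ → Fin m → ℝ) (hv : Continuous v)
    (e : ℝ → Fin n → ℝ)
    (he : ∀ t, 0 ≤ t → HasDerivAt e (F *ᵥ e t + B₂ *ᵥ v t) t) :
    (∀ T > (0:ℝ),
      (∫ t in (0:ℝ)..T,
          (e t ⬝ᵥ Qa *ᵥ e t + v t ⬝ᵥ R₂t *ᵥ v t
            + ρ * ((v t + K₂ *ᵥ e t) ⬝ᵥ (v t + K₂ *ᵥ e t))))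
        = e 0 ⬝ᵥ Pd *ᵥ e 0 - e T ⬝ᵥ Pd *ᵥ e T
          + ∫ t in (0:ℝ)..T,
              (v t + K₂d *ᵥ e t) ⬝ᵥ
                (R₂t + ρ • (1 : Matrix (Fin m) (Fin m) ℝ)) *ᵥ (v t + K₂d *ᵥ e t)) ∧
    (Tendsto e atTop (nhds 0) →
      (ENNReal.ofReal (e 0 ⬝ᵥ Pd *ᵥ e 0)
          ≤ ∫⁻ t in Set.Ioi (0:ℝ),
              ENNReal.ofReal (e t ⬝ᵥ Qa *ᵥ e t + v t ⬝ᵥ R₂t *ᵥ v t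
                + ρ * ((v t + K₂ *ᵥ e t) ⬝ᵥ (v t + K₂ *ᵥ e t)))) ∧
      ((∀ t, 0 ≤ t → v t = -(K₂d *ᵥ e t)) →
        (∫⁻ t in Set.Ioi (0:ℝ),
            ENNReal.ofReal (e t ⬝ᵥ Qa *ᵥ e t + v t ⬝ᵥ R₂t *ᵥ v t
              + ρ * ((v t + K₂ *ᵥ e t) ⬝ᵥ (v t + K₂ *ᵥ e t))))
          = ENNReal.ofReal (e 0 ⬝ᵥ Pd *ᵥ e 0))) := by
  set S : Matrix (Fin m) (Fin m) ℝ := R₂t + ρ • (1 : Matrix (Fin m) (Fin m) ℝ) with hSdef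
  set g : ℝ → ℝ := fun t => e t ⬝ᵥ Qa *ᵥ e t + v t ⬝ᵥ R₂t *ᵥ v t
    + ρ * ((v t + K₂ *ᵥ e t) ⬝ᵥ (v t + K₂ *ᵥ e t)) with hgdef
  set q : ℝ → ℝ := fun t => (v t + K₂d *ᵥ e t) ⬝ᵥ S *ᵥ (v t + K₂d *ᵥ e t) with hqdef
  set V : ℝ → ℝ := fun t => e t ⬝ᵥ Pd *ᵥ e t with hVdef
  have hecont : ContinuousOn e (Set.Ici 0) :=
    fun t ht => (he t ht).continuousAt.continuousWithinAt
  have hw : ContinuousOn (fun t => v t + K₂ *ᵥ e t) (Set.Ici 0) :=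
    hv.continuousOn.add (mulVec_contOn K₂ hecont)
  have hw' : ContinuousOn (fun t => v t + K₂d *ᵥ e t) (Set.Ici 0) :=
    hv.continuousOn.add (mulVec_contOn K₂d hecont)
  have hgcont : ContinuousOn g (Set.Ici 0) :=
    ((quad_continuous Qa hecont hecont).add
      (quad_continuous R₂t hv.continuousOn hv.continuousOn)).add
      (continuousOn_const.mul (dot_contOn hw hw))
  have hqcont : ContinuousOn q (Set.Ici 0) := quad_continuous S hw' hw'
  have hVd : ∀ t, 0 ≤ t → HasDerivAt V (q t - g t) t := by
    intro t ht
    have h := quad_hasDerivAt Pd (he t ht)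
    have hk := key_id B₂ K₂ F Qa R₂t hR₂t ρ hρ Pd hPdsymm hRic K₂d hK₂d (e t) (v t)
    have hd : q t - g t = (F *ᵥ e t + B₂ *ᵥ v t) ⬝ᵥ Pd *ᵥ e t
        + e t ⬝ᵥ Pd *ᵥ (F *ᵥ e t + B₂ *ᵥ v t) := by
      rw [hgdef, hqdef]
      dsimp only
      linarith [hk]
    rw [hd]
    exact h
  have hg_nonneg : ∀ t, 0 ≤ g t := by
    intro t
    have h1 : (0:ℝ) ≤ e t ⬝ᵥ Qa *ᵥ e t := by simpa using hQa.posSemidef.dotProduct_mulVec_nonneg (e t)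
    have h2 : (0:ℝ) ≤ v t ⬝ᵥ R₂t *ᵥ v t := by simpa using hR₂t.posSemidef.dotProduct_mulVec_nonneg (v t)
    have h3 := dot_self_nonneg (v t + K₂ *ᵥ e t)
    have := mul_nonneg hρ.le h3
    rw [hgdef]; dsimp only; linarith
  have hq_nonneg : ∀ t, 0 ≤ q t := by
    intro t
    have h1 : (0:ℝ) ≤ (v t + K₂d *ᵥ e t) ⬝ᵥ R₂t *ᵥ (v t + K₂d *ᵥ e t) := by
      simpa using hR₂t.posSemidef.dotProduct_mulVec_nonneg (v t + K₂d *ᵥ e t)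
    have h2 := dot_self_nonneg (v t + K₂d *ᵥ e t)
    have h3 := mul_nonneg hρ.le h2
    have hq : q t = (v t + K₂d *ᵥ e t) ⬝ᵥ R₂t *ᵥ (v t + K₂d *ᵥ e t)
        + ρ * ((v t + K₂d *ᵥ e t) ⬝ᵥ (v t + K₂d *ᵥ e t)) := by
      rw [hqdef]
      dsimp only
      rw [hSdef]
      simp only [Matrix.add_mulVec, Matrix.smul_mulVec, dotProduct_add,
        dotProduct_smul, smul_eq_mul, Matrix.one_mulVec, add_dotProduct]
    rw [hq]; linarith
  have part1 : ∀ T, 0 < T →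
      (∫ t in (0:ℝ)..T, g t) = V 0 - V T + ∫ t in (0:ℝ)..T, q t := by
    intro T hT
    have hsub : Set.uIcc (0:ℝ) T ⊆ Set.Ici 0 := by
      rw [Set.uIcc_of_le hT.le]
      exact fun x hx => hx.1
    have hgint : IntervalIntegrable g volume 0 T := (hgcont.mono hsub).intervalIntegrable
    have hqint : IntervalIntegrable q volume 0 T := (hqcont.mono hsub).intervalIntegrable
    have hftc : (∫ t in (0:ℝ)..T, (q t - g t)) = V T - V 0 :=
      integral_eq_sub_of_hasDerivAt (fun t ht => hVd t (hsub ht)) (hqint.sub hgint)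
    rw [intervalIntegral.integral_sub hqint hgint] at hftc
    linarith
  have hIoc : ∀ T, 0 < T → (∫⁻ t in Set.Ioc (0:ℝ) T, ENNReal.ofReal (g t))
      = ENNReal.ofReal (∫ t in (0:ℝ)..T, g t) := by
    intro T hT
    have hsub : Set.uIcc (0:ℝ) T ⊆ Set.Ici 0 := by
      rw [Set.uIcc_of_le hT.le]; exact fun x hx => hx.1
    have hgint : IntervalIntegrable g volume 0 T := (hgcont.mono hsub).intervalIntegrable
    rw [intervalIntegral.integral_of_le hT.le]
    exact (ofReal_integral_eq_lintegral_ofReal hgint.1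
      (Filter.Eventually.of_forall fun t => hg_nonneg t)).symm
  refine ⟨fun T hT => part1 T hT, fun htend => ?_⟩
  have hcontV : Continuous fun x : Fin n → ℝ => x ⬝ᵥ Pd *ᵥ x := quad_cont_vec Pd
  have hV0 : Tendsto V atTop (nhds 0) := by
    have h := (hcontV.tendsto 0).comp htend
    simpa [hVdef, Function.comp_def, dotProduct] using h
  constructor
  · show ENNReal.ofReal (V 0) ≤ _
    have hbound : ∀ T, 0 < T → ENNReal.ofReal (V 0 - V T)
        ≤ ∫⁻ t in Set.Ioi (0:ℝ), ENNReal.ofReal (g t) := by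
      intro T hT
      have h2 : (0:ℝ) ≤ ∫ t in (0:ℝ)..T, q t :=
        intervalIntegral.integral_nonneg hT.le (fun t _ => hq_nonneg t)
      have h1 : V 0 - V T ≤ ∫ t in (0:ℝ)..T, g t := by
        rw [part1 T hT]; linarith
      calc ENNReal.ofReal (V 0 - V T) ≤ ENNReal.ofReal (∫ t in (0:ℝ)..T, g t) :=
            ENNReal.ofReal_le_ofReal h1
        _ = ∫⁻ t in Set.Ioc (0:ℝ) T, ENNReal.ofReal (g t) := (hIoc T hT).symm
        _ ≤ _ := lintegral_mono_set Set.Ioc_subset_Ioi_self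
    have htendV : Tendsto (fun T => ENNReal.ofReal (V 0 - V T)) atTop
        (nhds (ENNReal.ofReal (V 0))) := by
      have h4 : Tendsto (fun T => V 0 - V T) atTop (nhds (V 0 - 0)) :=
        tendsto_const_nhds.sub hV0
      rw [sub_zero] at h4
      exact (ENNReal.continuous_ofReal.tendsto _).comp h4
    exact le_of_tendsto htendV ((eventually_gt_atTop 0).mono fun T hT => hbound T hT)
  · intro hv0
    have hqz : ∀ T, 0 < T → (∫ t in (0:ℝ)..T, q t) = 0 := by
      intro T hT
      have hz : Set.EqOn q 0 (Set.uIcc 0 T) := by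
        intro t ht
        have ht0 : (0:ℝ) ≤ t := by
          rw [Set.uIcc_of_le hT.le] at ht; exact ht.1
        show q t = 0
        rw [hqdef]; dsimp only
        rw [hv0 t ht0]
        simp
      rw [intervalIntegral.integral_congr hz]
      simp
    have hval : ∀ T, 0 < T → (∫ t in (0:ℝ)..T, g t) = V 0 - V T := by
      intro T hT; rw [part1 T hT, hqz T hT]; ring
    set a : ℕ → ENNReal := fun k => ∫⁻ t in Set.Ioc (0:ℝ) (k:ℝ), ENNReal.ofReal (g t) with hadef
    have ha_mono : Monotone a := by
      intro k l hkl
      exact lintegral_mono_set (Set.Ioc_subset_Ioc_right (by exact_mod_cast hkl))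
    have hIsup : (∫⁻ t in Set.Ioi (0:ℝ), ENNReal.ofReal (g t)) = ⨆ k, a k := by
      have hpt : ∀ t, (Set.Ioi (0:ℝ)).indicator (fun s => ENNReal.ofReal (g s)) t
          = ⨆ k : ℕ, (Set.Ioc (0:ℝ) (k:ℝ)).indicator (fun s => ENNReal.ofReal (g s)) t := by
        intro t
        rcases le_or_gt t 0 with ht | ht
        · simp [Set.indicator_apply, Set.mem_Ioi, Set.mem_Ioc, ht.not_gt]
        · rw [Set.indicator_of_mem (Set.mem_Ioi.mpr ht)]
          apply le_antisymm
          · obtain ⟨k, hk⟩ := exists_nat_ge t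
            exact le_iSup_of_le k (Set.indicator_of_mem (Set.mem_Ioc.mpr ⟨ht, hk⟩) (fun s => ENNReal.ofReal (g s))).symm.le
          · exact iSup_le fun k => Set.indicator_apply_le fun _ => le_rfl
      have hmeas : ∀ k : ℕ, AEMeasurable
          ((Set.Ioc (0:ℝ) (k:ℝ)).indicator fun s => ENNReal.ofReal (g s)) volume := by
        intro k
        refine (aemeasurable_indicator_iff measurableSet_Ioc).2 ?_
        exact ((hgcont.mono (fun x hx => hx.1.le)).aemeasurable measurableSet_Ioc).ennreal_ofReal
      have hmono : ∀ᵐ t : ℝ, Monotone fun k : ℕ =>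
          (Set.Ioc (0:ℝ) (k:ℝ)).indicator (fun s => ENNReal.ofReal (g s)) t := by
        refine Filter.Eventually.of_forall fun t k l hkl => ?_
        exact Set.indicator_le_indicator_of_subset
          (Set.Ioc_subset_Ioc_right (by exact_mod_cast hkl)) (fun _ => zero_le) t
      rw [← lintegral_indicator measurableSet_Ioi, lintegral_congr hpt,
        lintegral_iSup' hmeas hmono]
      refine iSup_congr fun k => ?_
      rw [lintegral_indicator measurableSet_Ioc]
    have h1 : Tendsto a atTop (nhds (⨆ k, a k)) := tendsto_atTop_iSup ha_mono
    have h2 : Tendsto a atTop (nhds (ENNReal.ofReal (V 0))) := by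
      have hVk : Tendsto (fun k : ℕ => V (k:ℝ)) atTop (nhds 0) :=
        hV0.comp tendsto_natCast_atTop_atTop
      have h3 : Tendsto (fun k : ℕ => ENNReal.ofReal (V 0 - V (k:ℝ))) atTop
          (nhds (ENNReal.ofReal (V 0))) := by
        have h4 : Tendsto (fun k : ℕ => V 0 - V (k:ℝ)) atTop (nhds (V 0 - 0)) :=
          tendsto_const_nhds.sub hVk
        rw [sub_zero] at h4
        exact (ENNReal.continuous_ofReal.tendsto _).comp h4
      refine h3.congr' ?_
      filter_upwards [eventually_ge_atTop 1] with k hk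
      have hk0 : (0:ℝ) < (k:ℝ) := by exact_mod_cast hk
      have h5 := hIoc (k:ℝ) hk0
      rw [hval (k:ℝ) hk0] at h5
      exact h5.symm
    have hfin : (⨆ k, a k) = ENNReal.ofReal (V 0) := tendsto_nhds_unique h1 h2
    show (∫⁻ t in Set.Ioi (0:ℝ), ENNReal.ofReal (g t)) = ENNReal.ofReal (V 0)
    rw [hIsup, hfin]
end

section
/- Let M ∈ ℝ^{n×n} be symmetric, Q_m ∈ ℝ^{n×n} symmetric positive definite, and let Â : [0,∞) → ℝ^{n×n} and P : [0,∞) → ℝ^{n×n} be C¹ with P(t) symmetric, satisfying Â(t)ᵀP(t) + P(t)Â(t) − P(t)MP(t) + Q_m = 0 for all t. Assume: (a) Â and P are bounded, i.e. Â, P ∈ L∞; (b) t ↦ ‖Â̇(t)‖ is in L²; and (c) there exists ν > 0 such that for every t ≥ 0 and every symmetric Q ∈ ℝ^{n×n}, any symmetric X solving XA_cl(t) + A_cl(t)ᵀX = −Q, where A_cl(t) = Â(t) − MP(t), satisfies ‖X‖ ≤ ν‖Q‖. Then t ↦ ‖Ṗ(t)‖ is in L², and t ↦ ‖Ȧ_cl(t)‖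 is in L². -/
open Matrix MeasureTheory
open scoped Matrix.Norms.L2Operator

lemma entry_mul_hasDerivAt {n : ℕ} {A B : ℝ → Matrix (Fin n) (Fin n) ℝ}
    {A'' B'' : Matrix (Fin n) (Fin n) ℝ} {t : ℝ}
    (hA : ∀ i j, HasDerivAt (fun s => A s i j) (A'' i j) t)
    (hB : ∀ i j, HasDerivAt (fun s => B s i j) (B'' i j) t) (i j : Fin n) :
    HasDerivAt (fun s => (A s * B s) i j) ((A'' * B t + A t * B'') i j) t := by
  simp only [Matrix.mul_apply, Matrix.add_apply]
  rw [← Finset.sum_add_distrib]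
  exact HasDerivAt.fun_sum fun k _ => (hA i k).mul (hB k j)

/-- **Square-integrability of the Riccati solution's derivative.**  Suppose symmetric
`P(t)` and `Â(t)` are C¹ and satisfy `Â(t)ᵀP(t) + P(t)Â(t) − P(t)MP(t) + Q_m = 0` with
`M` symmetric and `Q_m ≻ 0`.  If `Â, P ∈ L∞`, `‖Â̇‖ ∈ L²`, and solutions of the
Lyapunov equation for `A_cl(t) = Â(t) − MP(t)` satisfy a uniform bound `‖X‖ ≤ ν‖Q‖`,
then `‖Ṗ‖ ∈ L²` and `‖Ȧ_cl‖ ∈ L²`. -/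
theorem riccati_derivative_square_integrable {n : ℕ}
    (M Qm : Matrix (Fin n) (Fin n) ℝ) (hM : M.IsSymm) (hQm : Qm.PosDef)
    (Ahat P Ahat' P' : ℝ → Matrix (Fin n) (Fin n) ℝ)
    (hAhatDeriv : ∀ i j t, 0 ≤ t → HasDerivAt (fun s => Ahat s i j) (Ahat' t i j) t)
    (hPDeriv : ∀ i j t, 0 ≤ t → HasDerivAt (fun s => P s i j) (P' t i j) t)
    (hAhat'cont : Continuous Ahat') (hP'cont : Continuous P')
    (hPsymm : ∀ t, 0 ≤ t → (P t).IsSymm)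
    (hRic : ∀ t, 0 ≤ t → (Ahat t)ᵀ * P t + P t * Ahat t - P t * M * P t + Qm = 0)
    -- (a) `Â, P ∈ L∞`:
    (hbdd : ∃ C, ∀ t, 0 ≤ t → ‖Ahat t‖ ≤ C ∧ ‖P t‖ ≤ C)
    -- (b) `‖Â̇‖ ∈ L²`:
    (hA'L2 : MeasureTheory.IntegrableOn (fun t => ‖Ahat' t‖ ^ 2) (Set.Ici (0:ℝ)))
    -- (c) uniform solvability bound for the Lyapunov equation:
    (ν : ℝ) (hν : 0 < ν)
    (hLyap : ∀ t, 0 ≤ t → ∀ Q X : Matrix (Fin n) (Fin n) ℝ, Q.IsSymm → X.IsSymm →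
      X * (Ahat t - M * P t) + (Ahat t - M * P t)ᵀ * X = -Q → ‖X‖ ≤ ν * ‖Q‖) :
    MeasureTheory.IntegrableOn (fun t => ‖P' t‖ ^ 2) (Set.Ici (0:ℝ)) ∧
    MeasureTheory.IntegrableOn (fun t => ‖Ahat' t - M * P' t‖ ^ 2) (Set.Ici (0:ℝ)) := by
  obtain ⟨C, hC⟩ := hbdd
  have hC0 : 0 ≤ C := le_trans (norm_nonneg _) (hC 0 le_rfl).2
  have htr : ∀ A : Matrix (Fin n) (Fin n) ℝ, ‖Aᵀ‖ = ‖A‖ := fun A => by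
    rw [← conjTranspose_eq_transpose_of_trivial, l2_opNorm_conjTranspose]
  -- key pointwise bound for t > 0
  have key : ∀ t : ℝ, 0 < t → ‖P' t‖ ≤ 2 * ν * C * ‖Ahat' t‖ := by
    intro t ht
    have ht0 : (0:ℝ) ≤ t := ht.le
    have hA := fun i j => hAhatDeriv i j t ht0
    have hP := fun i j => hPDeriv i j t ht0
    have hAT : ∀ i j, HasDerivAt (fun s => (Ahat s)ᵀ i j) ((Ahat' t)ᵀ i j) t :=
      fun i j => hAhatDeriv j i t ht0
    have hMc : ∀ i j, HasDerivAt (fun _ : ℝ => M i j)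
        ((0 : Matrix (Fin n) (Fin n) ℝ) i j) t := by
      intro i j; simpa using hasDerivAt_const t (M i j)
    have hPM : ∀ i j, HasDerivAt (fun s => (P s * M) i j) ((P' t * M + P t * (0 : Matrix (Fin n) (Fin n) ℝ)) i j) t :=
      fun i j => entry_mul_hasDerivAt hP hMc i j
    have hG0 : ((Ahat' t)ᵀ * P t + (Ahat t)ᵀ * P' t) + (P' t * Ahat t + P t * Ahat' t)
        - ((P' t * M + P t * (0 : Matrix (Fin n) (Fin n) ℝ)) * P t + P t * M * P' t) = 0 := by
      ext i j
      have hF : HasDerivAt (fun s => ((Ahat s)ᵀ * P s + P s * Ahat s - P s * M * P s + Qm) i j)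
          ((((Ahat' t)ᵀ * P t + (Ahat t)ᵀ * P' t) + (P' t * Ahat t + P t * Ahat' t)
            - ((P' t * M + P t * (0 : Matrix (Fin n) (Fin n) ℝ)) * P t + P t * M * P' t)) i j) t := by
        simp only [Matrix.add_apply, Matrix.sub_apply]
        exact (((entry_mul_hasDerivAt hAT hP i j).add (entry_mul_hasDerivAt hP hA i j)).sub
          (entry_mul_hasDerivAt hPM hP i j)).add_const _
      have heq : (fun s => ((Ahat s)ᵀ * P s + P s * Ahat s - P s * M * P s + Qm) i j)
          =ᶠ[nhds t] fun _ => (0:ℝ) := by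
        filter_upwards [Ioi_mem_nhds ht] with s hs
        rw [hRic s hs.le]; simp
      have h2 := hF.congr_of_eventuallyEq heq.symm
      have := h2.unique (hasDerivAt_const t 0)
      simpa using this
    have hPt := (hPsymm t ht0).eq
    have hQsym : ((Ahat' t)ᵀ * P t + P t * Ahat' t).IsSymm := by
      rw [Matrix.IsSymm, Matrix.transpose_add, Matrix.transpose_mul, Matrix.transpose_mul,
        Matrix.transpose_transpose, hPt]
      exact add_comm _ _
    have hXsym : (P' t).IsSymm := by
      ext i j
      rw [Matrix.transpose_apply]
      refine HasDerivAt.unique ?_ (hPDeriv i j t ht0)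
      refine (hPDeriv j i t ht0).congr_of_eventuallyEq ?_
      filter_upwards [Ioi_mem_nhds ht] with s hs
      exact ((hPsymm s hs.le).apply i j).symm
    have hlyapEq : P' t * (Ahat t - M * P t) + (Ahat t - M * P t)ᵀ * P' t
        = -((Ahat' t)ᵀ * P t + P t * Ahat' t) := by
      rw [Matrix.transpose_sub, Matrix.transpose_mul, hM.eq, hPt]
      calc P' t * (Ahat t - M * P t) + ((Ahat t)ᵀ - P t * M) * P' t
          = (((Ahat' t)ᵀ * P t + (Ahat t)ᵀ * P' t) + (P' t * Ahat t + P t * Ahat' t)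
            - ((P' t * M + P t * (0 : Matrix (Fin n) (Fin n) ℝ)) * P t + P t * M * P' t))
            - ((Ahat' t)ᵀ * P t + P t * Ahat' t) := by noncomm_ring
        _ = -((Ahat' t)ᵀ * P t + P t * Ahat' t) := by rw [hG0, zero_sub]
    have hb := hLyap t ht0 _ _ hQsym hXsym hlyapEq
    have h1 : ‖(Ahat' t)ᵀ * P t‖ ≤ ‖Ahat' t‖ * C := by
      calc ‖(Ahat' t)ᵀ * P t‖ ≤ ‖(Ahat' t)ᵀ‖ * ‖P t‖ := norm_mul_le _ _
        _ = ‖Ahat' t‖ * ‖P t‖ := by rw [htr]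
        _ ≤ ‖Ahat' t‖ * C := mul_le_mul_of_nonneg_left (hC t ht0).2 (norm_nonneg _)
    have h2 : ‖P t * Ahat' t‖ ≤ C * ‖Ahat' t‖ := by
      calc ‖P t * Ahat' t‖ ≤ ‖P t‖ * ‖Ahat' t‖ := norm_mul_le _ _
        _ ≤ C * ‖Ahat' t‖ := mul_le_mul_of_nonneg_right (hC t ht0).2 (norm_nonneg _)
    have h3 : ‖(Ahat' t)ᵀ * P t + P t * Ahat' t‖ ≤ 2 * C * ‖Ahat' t‖ := by
      calc ‖(Ahat' t)ᵀ * P t + P t * Ahat' t‖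
          ≤ ‖(Ahat' t)ᵀ * P t‖ + ‖P t * Ahat' t‖ := norm_add_le _ _
        _ ≤ 2 * C * ‖Ahat' t‖ := by linarith
    calc ‖P' t‖ ≤ ν * ‖(Ahat' t)ᵀ * P t + P t * Ahat' t‖ := hb
      _ ≤ ν * (2 * C * ‖Ahat' t‖) := mul_le_mul_of_nonneg_left h3 hν.le
      _ = 2 * ν * C * ‖Ahat' t‖ := by ring
  -- a.e. facts on the restricted measure
  have hne : ∀ᵐ t ∂(volume.restrict (Set.Ici (0:ℝ))), t ≠ 0 := by
    refine Filter.Eventually.filter_mono (ae_mono Measure.restrict_le_self) ?_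
    have h0 : (volume : Measure ℝ) {(0:ℝ)} = 0 := measure_singleton 0
    rw [← compl_compl {(0:ℝ)}] at h0
    simpa [ae_iff] using h0
  have hin : ∀ᵐ t ∂(volume.restrict (Set.Ici (0:ℝ))), t ∈ Set.Ici (0:ℝ) :=
    ae_restrict_mem measurableSet_Ici
  constructor
  · refine Integrable.mono' (hA'L2.const_mul ((2 * ν * C) ^ 2)) ?_ ?_
    · exact ((hP'cont.norm.pow 2)).aestronglyMeasurable
    · filter_upwards [hin, hne] with t ht htne
      have htpos : 0 < t := lt_of_le_of_ne ht (Ne.symm htne)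
      have hk := key t htpos
      rw [Real.norm_of_nonneg (by positivity)]
      nlinarith [norm_nonneg (P' t), norm_nonneg (Ahat' t)]
  · have hcont : Continuous fun t => Ahat' t - M * P' t :=
      hAhat'cont.sub (continuous_const.mul hP'cont)
    refine Integrable.mono' (hA'L2.const_mul ((1 + ‖M‖ * (2 * ν * C)) ^ 2)) ?_ ?_
    · exact (hcont.norm.pow 2).aestronglyMeasurable
    · filter_upwards [hin, hne] with t ht htne
      have htpos : 0 < t := lt_of_le_of_ne ht (Ne.symm htne)
      have hk := key t htpos
      have hk2 : ‖Ahat' t - M * P' t‖ ≤ (1 + ‖M‖ * (2 * ν * C)) * ‖Ahat' t‖ := by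
        calc ‖Ahat' t - M * P' t‖ ≤ ‖Ahat' t‖ + ‖M * P' t‖ := norm_sub_le _ _
          _ ≤ ‖Ahat' t‖ + ‖M‖ * ‖P' t‖ := by linarith [norm_mul_le M (P' t)]
          _ ≤ ‖Ahat' t‖ + ‖M‖ * (2 * ν * C * ‖Ahat' t‖) :=
            by nlinarith [norm_nonneg M]
          _ = (1 + ‖M‖ * (2 * ν * C)) * ‖Ahat' t‖ := by ring
      rw [Real.norm_of_nonneg (by positivity)]
      nlinarith [norm_nonneg (Ahat' t - M * P' t), norm_nonneg (Ahat' t), norm_nonneg M,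
        mul_nonneg (norm_nonneg M) (mul_nonneg (mul_nonneg (by linarith : (0:ℝ) ≤ 2*ν) hC0) (norm_nonneg (Ahat' t)))]
end
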